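/- Let Z be a set of size 200d (d ≥ 1) and suppose that for every subset U of Z of size 100d there is assigned a finite set C_U (a cycle's vertex set) whose intersection with Z has size between 98d and 100d and is contained in U. Then the number of distinct sets among {C_U : U ∈ (Z choose 100d)} is at least (200d choose 100d)/(102d choose 2d) ≥ 2^{50d}. -/

import Mathlib

lemma aux_choose_le_two_pow (n k : ℕ) : n.choose k ≤ 2 ^ n := by
  rcases le_or_gt k n with h | h
  · calc n.choose k ≤ ∑ m ∈ Finset.range (n + 1), n.choose m :=
        Finset.single_le_sum (fun _ _ => Nat.zero_le _)
          (Finset.mem_range.mpr (Nat.lt_succ_of_le h))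
    _ = 2 ^ n := Nat.sum_range_choose n
  · rw [Nat.choose_eq_zero_of_lt h]; exact Nat.zero_le _

lemma aux_choose_sub_le (n k : ℕ) :
    ∀ j, j ≤ k → k ≤ n → (n - j).choose (k - j) ≤ n.choose k := by
  intro j
  induction j with
  | zero => simp
  | succ i ih =>
    intro hj hk
    have h1 : (n - (i + 1)).choose (k - (i + 1)) ≤ (n - i).choose (k - i) := by
      have e1 : n - i = (n - (i + 1)) + 1 := by omega
      have e2 : k - i = (k - (i + 1)) + 1 := by omega
      rw [e1, e2, Nat.choose_succ_succ]
      exact Nat.le_add_right _ _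
    exact h1.trans (ih (by omega) hk)

lemma aux_mul_le_pow {a : ℕ} (ha : 2 ≤ a) : ∀ d, 1 ≤ d → a * d ≤ a ^ d := by
  intro d
  induction d with
  | zero => omega
  | succ n ih =>
    intro _
    rcases Nat.eq_zero_or_pos n with h | h
    · subst h; simp
    · have h1 : a * (n + 1) = a * n + a := by ring
      have h2 : a ≤ a ^ n := Nat.le_self_pow (by omega) a
      have h3 : a * n + a ≤ a ^ n + a ^ n := Nat.add_le_add (ih h) h2
      have h4 : a ^ n + a ^ n ≤ a * a ^ n := by nlinarith
      calc a * (n + 1) = a * n + a := h1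
        _ ≤ a ^ n + a ^ n := h3
        _ ≤ a * a ^ n := h4
        _ = a ^ (n + 1) := (pow_succ' a n).symm

/-- Let `Z` have size `200d` (with `d ≥ 1`) and suppose each `100d`-subset `U` of `Z` is
assigned a finite set `C U` (the vertex set of a cycle) with `C U ∩ Z ⊆ U` and
`98d ≤ |C U ∩ Z| ≤ 100d`. Then the number of distinct sets among the `C U` is at least
`(200d choose 100d)/(102d choose 2d)`, which is at least `2^{50d}`. -/
theorem stmt_18 {α : Type*} [DecidableEq α] (d : ℕ) (hd : 1 ≤ d)
    (Z : Finset α) (hZ : Z.card = 200 * d) (C : Finset α → Finset α)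
    (hC : ∀ U ∈ Z.powersetCard (100 * d),
      (C U ∩ Z) ⊆ U ∧ 98 * d ≤ (C U ∩ Z).card ∧ (C U ∩ Z).card ≤ 100 * d) :
    (((200 * d).choose (100 * d) : ℝ) / ((102 * d).choose (2 * d) : ℝ)
        ≤ (((Z.powersetCard (100 * d)).image C).card : ℝ)) ∧
    ((2 : ℝ) ^ (50 * d)
        ≤ ((200 * d).choose (100 * d) : ℝ) / ((102 * d).choose (2 * d) : ℝ)) := by
  have hBpos : 0 < (102 * d).choose (2 * d) := Nat.choose_pos (by omega)
  have hBposR : (0 : ℝ) < ((102 * d).choose (2 * d) : ℝ) := by exact_mod_cast hBpos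
  -- Part 1 (ℕ version): total count ≤ B * (image card)
  have key : (200 * d).choose (100 * d) ≤
      (102 * d).choose (2 * d) * ((Z.powersetCard (100 * d)).image C).card := by
    have hcardP : (Z.powersetCard (100 * d)).card = (200 * d).choose (100 * d) := by
      rw [Finset.card_powersetCard, hZ]
    rw [← hcardP]
    apply Finset.card_le_mul_card_image
    intro V hV
    obtain ⟨U₀, hU₀mem, hU₀V⟩ := Finset.mem_image.mp hV
    set S : Finset α := V ∩ Z with hS
    obtain ⟨hsub₀, hlo, hhi⟩ := hC U₀ hU₀mem
    rw [hU₀V] at hsub₀ hlo hhi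
    rw [← hS] at hsub₀ hlo hhi
    have hSZ : S ⊆ Z := Finset.inter_subset_right
    -- inject fibers into powersetCard of Z \ S
    have hinj : {U ∈ Z.powersetCard (100 * d) | C U = V}.card ≤
        ((Z \ S).powersetCard (100 * d - S.card)).card := by
      apply Finset.card_le_card_of_injOn (fun U => U \ S)
      · intro U hU
        simp only [Finset.mem_coe, Finset.mem_filter] at hU
        obtain ⟨hUmem, hUV⟩ := hU
        obtain ⟨hUZ, hUcard⟩ := Finset.mem_powersetCard.mp hUmem
        obtain ⟨hsub, _, _⟩ := hC U hUmem
        rw [hUV] at hsub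
        rw [Finset.mem_coe, Finset.mem_powersetCard]
        constructor
        · exact Finset.sdiff_subset_sdiff hUZ le_rfl
        · rw [Finset.card_sdiff_of_subset hsub, hUcard]
      · intro U hU U' hU' hEq
        simp only [Finset.coe_filter, Set.mem_setOf_eq] at hU hU'
        obtain ⟨hUmem, hUV⟩ := hU
        obtain ⟨hU'mem, hU'V⟩ := hU'
        obtain ⟨hsub, _, _⟩ := hC U hUmem
        obtain ⟨hsub', _, _⟩ := hC U' hU'mem
        rw [hUV] at hsub
        rw [hU'V] at hsub'
        have := congrArg (· ∪ S) hEq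
        simpa only [(Finset.sdiff_union_of_subset hsub : U \ S ∪ S = U),
          (Finset.sdiff_union_of_subset hsub' : U' \ S ∪ S = U')] using this
    refine hinj.trans ?_
    rw [Finset.card_powersetCard, Finset.card_sdiff_of_subset hSZ, hZ]
    have e1 : 200 * d - S.card = 102 * d - (S.card - 98 * d) := by omega
    have e2 : 100 * d - S.card = 2 * d - (S.card - 98 * d) := by omega
    rw [e1, e2]
    exact aux_choose_sub_le (102 * d) (2 * d) (S.card - 98 * d) (by omega) (by omega)
  -- Part 2 (ℕ version): 2^(50d) * B ≤ choose
  have key2 : 2 ^ (50 * d) * (102 * d).choose (2 * d) ≤ (200 * d).choose (100 * d) := by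
    have hcb : 4 ^ (100 * d) ≤ 2 * (100 * d) * (200 * d).choose (100 * d) := by
      have := Nat.four_pow_le_two_mul_self_mul_centralBinom (100 * d) (by omega)
      have hc : Nat.centralBinom (100 * d) = (200 * d).choose (100 * d) := by
        unfold Nat.centralBinom
        congr 1
        omega
      rwa [hc] at this
    have hB : (102 * d).choose (2 * d) ≤ 2 ^ (102 * d) := aux_choose_le_two_pow _ _
    have h200 : 200 * d ≤ 2 ^ (48 * d) := by
      calc 200 * d ≤ 2 ^ 48 * d := by nlinarith [Nat.one_le_two_pow (n := 48)]
        _ ≤ (2 ^ 48) ^ d := aux_mul_le_pow (by norm_num) d hd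
        _ = 2 ^ (48 * d) := by rw [← pow_mul]
    have hmain : 2 * (100 * d) * (2 ^ (50 * d) * (102 * d).choose (2 * d)) ≤
        2 * (100 * d) * (200 * d).choose (100 * d) := by
      calc 2 * (100 * d) * (2 ^ (50 * d) * (102 * d).choose (2 * d))
          ≤ 2 ^ (48 * d) * (2 ^ (50 * d) * 2 ^ (102 * d)) := by
            have : 2 * (100 * d) = 200 * d := by ring
            rw [this]
            exact Nat.mul_le_mul h200 (Nat.mul_le_mul_left _ hB)
        _ = 4 ^ (100 * d) := by
            rw [← pow_add, ← pow_add]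
            have : (4 : ℕ) = 2 ^ 2 := by norm_num
            rw [this, ← pow_mul]
            congr 1
            ring
        _ ≤ 2 * (100 * d) * (200 * d).choose (100 * d) := hcb
    exact Nat.le_of_mul_le_mul_left hmain (by omega)
  constructor
  · rw [div_le_iff₀ hBposR]
    calc ((200 * d).choose (100 * d) : ℝ)
        ≤ (((102 * d).choose (2 * d) * ((Z.powersetCard (100 * d)).image C).card : ℕ) : ℝ) := by
          exact_mod_cast key
      _ = (((Z.powersetCard (100 * d)).image C).card : ℝ) * ((102 * d).choose (2 * d) : ℝ) := by
          push_cast; ring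
  · rw [le_div_iff₀ hBposR]
    have : ((2 ^ (50 * d) * (102 * d).choose (2 * d) : ℕ) : ℝ)
        ≤ (((200 * d).choose (100 * d) : ℕ) : ℝ) := by exact_mod_cast key2
    push_cast at this
    linarith
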